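/- Fix an integer κ ≥ 3, let (X_t)_{t≥0} be a κ-color FCA trajectory on ℤ, and suppose no edge flips at any time t ≥ t_0, where t_0 ≥ 0. Then for all x, y ∈ ℤ and all t ≥ t_0: ∫_x^y dX_{t+1} − ∫_x^y dX_t = 1{x is excited at time t} − 1{y is excited at time t}. Moreover, the tournament expansion satisfies rk_{t+1}(x) − rk_t(x) = 1{x is excited at time t} for every x ∈ ℤ and t ≥ t_0. -/

import Mathlib

noncomputable section

namespace FCA

/-- The blinking color `b(κ) = ⌊(κ-1)/2⌋`. -/
def blink (κ : ℕ) : ℕ := (κ - 1) / 2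

/-- One step of the κ-color firefly cellular automaton on ℤ. -/
def step (κ : ℕ) (X : ℤ → ZMod κ) : ℤ → ZMod κ := fun x =>
  if (X x).val > blink κ ∧ ((X (x - 1)).val = blink κ ∨ (X (x + 1)).val = blink κ)
  then X x else X x + 1

/-- The FCA trajectory started from `X0`. -/
def traj (κ : ℕ) (X0 : ℤ → ZMod κ) : ℕ → ℤ → ZMod κ
  | 0 => X0
  | t + 1 => step κ (traj κ X0 t)

/-- Site `x` is excited at time `t`: `X_{t+1}(x) = X_t(x)`. -/
def excited (κ : ℕ) (X0 : ℤ → ZMod κ) (t : ℕ) (x : ℤ) : Prop :=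
  traj κ X0 (t + 1) x = traj κ X0 t x

/-- The number of excitations of site `x` before time `t`. -/
def ne' (κ : ℕ) (X0 : ℤ → ZMod κ) (t : ℕ) (x : ℤ) : ℕ :=
  ((Finset.range t).filter fun s => traj κ X0 (s + 1) x = traj κ X0 s x).card

/-- The associated 1-form on the oriented edge `(x, x+1)`. -/
def dform (κ : ℕ) (X : ℤ → ZMod κ) (x : ℤ) : ℤ :=
  let d : ℕ := (X (x + 1) - X x).val
  if 2 * d < κ then (d : ℤ)
  else if κ < 2 * d then (d : ℤ) - (κ : ℤ)
  else if (X x).val ≤ blink κ then ((κ / 2 : ℕ) : ℤ) else -((κ / 2 : ℕ) : ℤ)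

/-- The edge `(x, x+1)` flips at time `t`. -/
def flips (κ : ℕ) (X0 : ℤ → ZMod κ) (t : ℕ) (x : ℤ) : Prop :=
  (0 < dform κ (traj κ X0 t) x ∧ dform κ (traj κ X0 (t + 1)) x < 0) ∨
  (dform κ (traj κ X0 t) x < 0 ∧ 0 < dform κ (traj κ X0 (t + 1)) x)

/-- Path integral of an edge function: `∫_x^y f = Σ_{i=x}^{y-1} f(i)` for `x ≤ y`,
and `∫_y^x f = -∫_x^y f`. -/
def pathInt (f : ℤ → ℤ) (x y : ℤ) : ℤ :=
  if x ≤ y then ∑ i ∈ Finset.Ico x y, f i else -∑ i ∈ Finset.Ico y x, f i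

/-- The tournament expansion: `rk_t(0) = ne_t(0)` and `rk_t(x) = rk_t(0) - ∫_0^x dX_t`. -/
def rk (κ : ℕ) (X0 : ℤ → ZMod κ) (t : ℕ) (x : ℤ) : ℤ :=
  (ne' κ X0 t 0 : ℤ) - pathInt (dform κ (traj κ X0 t)) 0 x

/-- `M_t(r)`: the maximum rank at time `t` among sites `x` with `|x| ≤ r`. -/
def maxRk (κ : ℕ) (X0 : ℤ → ZMod κ) (t : ℕ) (r : ℝ) : ℤ :=
  sSup (rk κ X0 t '' {x : ℤ | |(x : ℝ)| ≤ r})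

end FCA

open FCA
open scoped Classical

private lemma telescope (g : ℤ → ℤ) (x y : ℤ) (h : x ≤ y) :
    ∑ i ∈ Finset.Ico x y, (g i - g (i + 1)) = g x - g y := by
  obtain ⟨n, rfl⟩ : ∃ n : ℕ, y = x + n := ⟨(y - x).toNat, by omega⟩
  clear h
  induction n with
  | zero => simp
  | succ k ih =>
      have hc : (x + ((k + 1 : ℕ) : ℤ)) = (x + (k : ℕ)) + 1 := by push_cast; ring
      have hins : Finset.Ico x (x + ((k : ℕ) : ℤ) + 1) =
          insert (x + (k : ℕ)) (Finset.Ico x (x + (k : ℕ))) := by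
        ext i
        simp only [Finset.mem_Ico, Finset.mem_insert]
        push_cast
        omega
      rw [hc, hins, Finset.sum_insert (by simp), ih]
      ring

set_option maxHeartbeats 1000000 in
lemma edge_eq (κ : ℕ) (hκ : 3 ≤ κ) (X0 : ℤ → ZMod κ) (t : ℕ) (x : ℤ)
    (hnf : ¬ flips κ X0 t x) :
    dform κ (traj κ X0 (t + 1)) x =
      dform κ (traj κ X0 t) x + (if excited κ X0 t x then 1 else 0)
        - (if excited κ X0 t (x + 1) then 1 else 0) := by
  haveI : NeZero κ := ⟨by omega⟩
  haveI : Fact (1 < κ) := ⟨by omega⟩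
  have hexc : ∀ z : ℤ, (excited κ X0 t z ∧ traj κ X0 (t+1) z = traj κ X0 t z)
      ∨ (¬ excited κ X0 t z ∧ traj κ X0 (t+1) z = traj κ X0 t z + 1) := by
    intro z
    by_cases h : excited κ X0 t z
    · exact Or.inl ⟨h, h⟩
    · refine Or.inr ⟨h, ?_⟩
      have : traj κ X0 (t+1) z = step κ (traj κ X0 t) z := rfl
      rw [this]
      unfold step
      split_ifs with hc
      · exact absurd (show excited κ X0 t z from by
          show traj κ X0 (t+1) z = traj κ X0 t z
          rw [this]; unfold step; simp [hc]) h
      · rfl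
  have hdX : (traj κ X0 t (x+1) - traj κ X0 t x).val < κ := ZMod.val_lt _
  have haX : (traj κ X0 t x).val < κ := ZMod.val_lt _
  have hneg1 : ((-1 : ZMod κ)).val = κ - 1 := by
    obtain ⟨m, rfl⟩ : ∃ m, κ = m + 1 := ⟨κ - 1, by omega⟩
    simpa using ZMod.val_neg_one m
  have hv1 : (1 : ZMod κ).val = 1 := ZMod.val_one κ
  set X := traj κ X0 t with hXdef
  set Y := traj κ X0 (t+1) with hYdef
  simp only [flips, ← hXdef, ← hYdef] at hnf
  rcases hexc x with ⟨e1, h1⟩ | ⟨e1, h1⟩ <;> rcases hexc (x+1) with ⟨e2, h2⟩ | ⟨e2, h2⟩ <;>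
    simp only [e1, e2, if_pos, if_neg, if_true, if_false, not_false_iff]
  -- case both excited
  · have hE : Y (x+1) - Y x = X (x+1) - X x := by rw [h1, h2]
    simp only [dform]
    rw [hE, h1, add_sub_cancel_right]
  -- x excited, x+1 not : E = D + 1
  · have hE : Y (x+1) - Y x = (X (x+1) - X x) + 1 := by rw [h1, h2]; ring
    have hEv : (Y (x+1) - Y x).val = ((X (x+1) - X x).val + 1) % κ := by
      rw [hE, ZMod.val_add, hv1]
    set d := (X (x+1) - X x).val with hd
    set a := (X x).val with ha
    have haY : (Y x).val = a := by rw [h1]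
    rcases Nat.lt_or_ge (d + 1) κ with hlt | hge
    · rw [Nat.mod_eq_of_lt hlt] at hEv
      simp only [dform, hEv, haY, blink] at hnf ⊢
      split_ifs at hnf ⊢ <;> omega
    · have : (d + 1) % κ = 0 := by
        have : d + 1 = κ := by omega
        simp [this]
      rw [this] at hEv
      simp only [dform, hEv, haY, blink] at hnf ⊢
      split_ifs at hnf ⊢ <;> omega
  -- x not excited, x+1 excited : E = D - 1
  · have hE : Y (x+1) - Y x = (X (x+1) - X x) + (-1) := by rw [h1, h2]; ring
    have hEv : (Y (x+1) - Y x).val = ((X (x+1) - X x).val + (κ - 1)) % κ := by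
      rw [hE, ZMod.val_add, hneg1]
    have haY : (Y x).val = ((X x).val + 1) % κ := by rw [h1, ZMod.val_add, hv1]
    set d := (X (x+1) - X x).val with hd
    set a := (X x).val with ha
    have hEv' : (Y (x+1) - Y x).val = if d = 0 then κ - 1 else d - 1 := by
      rw [hEv]
      split_ifs with h0
      · rw [h0, Nat.zero_add, Nat.mod_eq_of_lt (by omega)]
      · have : d + (κ - 1) = (d - 1) + κ := by omega
        rw [this, Nat.add_mod_right, Nat.mod_eq_of_lt (by omega)]
    have haY' : (Y x).val = if a + 1 = κ then 0 else a + 1 := by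
      rw [haY]
      split_ifs with h0
      · simp [h0]
      · rw [Nat.mod_eq_of_lt (by omega)]
    simp only [dform, hEv', haY', blink] at hnf ⊢
    split_ifs at hnf ⊢ <;> omega
  -- neither excited : E = D
  · have hE : Y (x+1) - Y x = X (x+1) - X x := by rw [h1, h2]; ring
    have haY : (Y x).val = ((X x).val + 1) % κ := by rw [h1, ZMod.val_add, hv1]
    set d := (X (x+1) - X x).val with hd
    set a := (X x).val with ha
    have haY' : (Y x).val = if a + 1 = κ then 0 else a + 1 := by
      rw [haY]
      split_ifs with h0
      · simp [h0]
      · rw [Nat.mod_eq_of_lt (by omega)]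
    simp only [dform, hE, haY', blink] at hnf ⊢
    split_ifs at hnf ⊢ <;> omega


/-- If no edge flips at any time `t ≥ t₀`, then for all sites `x, y` and
`t ≥ t₀` the change of the path integral `∫_x^y dX_t` equals the indicator that `x` is
excited minus the indicator that `y` is excited; consequently
`rk_{t+1}(x) - rk_t(x) = 1{x excited at time t}`. -/
theorem fca_rank_increment (κ : ℕ) (hκ : 3 ≤ κ) (X0 : ℤ → ZMod κ) (t₀ : ℕ)
    (hnoflip : ∀ t : ℕ, t₀ ≤ t → ∀ x : ℤ, ¬ flips κ X0 t x) :
    (∀ (x y : ℤ) (t : ℕ), t₀ ≤ t →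
      pathInt (dform κ (traj κ X0 (t + 1))) x y - pathInt (dform κ (traj κ X0 t)) x y =
        (if excited κ X0 t x then 1 else 0) - (if excited κ X0 t y then 1 else 0)) ∧
    (∀ (x : ℤ) (t : ℕ), t₀ ≤ t →
      rk κ X0 (t + 1) x - rk κ X0 t x = if excited κ X0 t x then 1 else 0) := by
  constructor
  · intro x y t ht
    have key : ∀ i : ℤ, dform κ (traj κ X0 (t + 1)) i - dform κ (traj κ X0 t) i =
        (if excited κ X0 t i then 1 else 0) - (if excited κ X0 t (i + 1) then 1 else 0) := by
      intro i
      have := edge_eq κ hκ X0 t i (hnoflip t ht i)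
      omega
    have main : ∀ u v : ℤ, u ≤ v →
        (∑ i ∈ Finset.Ico u v, dform κ (traj κ X0 (t + 1)) i)
          - (∑ i ∈ Finset.Ico u v, dform κ (traj κ X0 t) i) =
        (if excited κ X0 t u then 1 else 0) - (if excited κ X0 t v then 1 else 0) := by
      intro u v huv
      rw [← Finset.sum_sub_distrib]
      rw [Finset.sum_congr rfl fun i _ => key i]
      exact telescope (fun i => if excited κ X0 t i then 1 else 0) u v huv
    by_cases h : x ≤ y
    · simp only [pathInt, if_pos h]
      exact main x y h
    · simp only [pathInt, if_neg h]
      have := main y x (by omega)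
      omega
  · intro x t ht
    have hP : pathInt (dform κ (traj κ X0 (t + 1))) 0 x - pathInt (dform κ (traj κ X0 t)) 0 x =
        (if excited κ X0 t 0 then 1 else 0) - (if excited κ X0 t x then 1 else 0) := by
      have key : ∀ i : ℤ, dform κ (traj κ X0 (t + 1)) i - dform κ (traj κ X0 t) i =
          (if excited κ X0 t i then 1 else 0) - (if excited κ X0 t (i + 1) then 1 else 0) := by
        intro i
        have := edge_eq κ hκ X0 t i (hnoflip t ht i)
        omega
      have main : ∀ u v : ℤ, u ≤ v →
          (∑ i ∈ Finset.Ico u v, dform κ (traj κ X0 (t + 1)) i)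
            - (∑ i ∈ Finset.Ico u v, dform κ (traj κ X0 t) i) =
          (if excited κ X0 t u then 1 else 0) - (if excited κ X0 t v then 1 else 0) := by
        intro u v huv
        rw [← Finset.sum_sub_distrib]
        rw [Finset.sum_congr rfl fun i _ => key i]
        exact telescope (fun i => if excited κ X0 t i then 1 else 0) u v huv
      by_cases h : (0:ℤ) ≤ x
      · simp only [pathInt, if_pos h]
        exact main 0 x h
      · simp only [pathInt, if_neg h]
        have := main x 0 (by omega)
        omega
    have hne : (ne' κ X0 (t + 1) 0 : ℤ) =
        (ne' κ X0 t 0 : ℤ) + (if excited κ X0 t 0 then 1 else 0) := by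
      unfold ne'
      rw [Finset.range_add_one, Finset.filter_insert]
      simp only [excited]
      split_ifs with h
      · rw [Finset.card_insert_of_notMem (by simp)]
        show (_ : ℤ) = _ + (if excited κ X0 t 0 then 1 else 0)
        rw [if_pos (show excited κ X0 t 0 from h)]
        push_cast; ring
      · show (_ : ℤ) = _ + (if excited κ X0 t 0 then 1 else 0)
        rw [if_neg (show ¬ excited κ X0 t 0 from h)]
        push_cast; ring
    unfold rk
    omega
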